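/- Let (U₁, U₂) have a nondegenerate bivariate normal distribution with means μ₁, μ₂, standard deviations σ₁, σ₂ > 0, correlation ρ ∈ (−1, 1), and covariance σ₁₂ = ρσ₁σ₂. Then for all integers k ≥ 1 and m ≥ 1: m·(σ₁²σ₂² − σ₁₂²)·E[U₁^k U₂^{m-1}·1{U₁>0, U₂>0}] = E[(σ₁²·U₁^k U₂^{m+1} − σ₁₂·U₁^{k+1}U₂^m − (σ₁²μ₂ − σ₁₂μ₁)·U₁^k U₂^m)·1{U₁>0, U₂>0}]. -/

import Mathlib

open MeasureTheory

/-- Density of the nondegenerate bivariate normal distribution with means `μ₁, μ₂`,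
standard deviations `σ₁, σ₂ > 0` and correlation `ρ ∈ (−1, 1)`. -/
noncomputable def binormalPDF (μ₁ μ₂ σ₁ σ₂ ρ u₁ u₂ : ℝ) : ℝ :=
  (1 / (2 * Real.pi * σ₁ * σ₂ * Real.sqrt (1 - ρ ^ 2))) *
    Real.exp (-(1 / (2 * (1 - ρ ^ 2))) *
      ((u₁ - μ₁) ^ 2 / σ₁ ^ 2 - 2 * ρ * (u₁ - μ₁) * (u₂ - μ₂) / (σ₁ * σ₂)
        + (u₂ - μ₂) ^ 2 / σ₂ ^ 2))


open Real Filter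

section Helpers

lemma pg_integrable (n : ℕ) {a : ℝ} (ha : 0 < a) (c : ℝ) :
    Integrable (fun u : ℝ => u ^ n * Real.exp (-a * (u - c) ^ 2)) := by
  have base : ∀ i : ℕ, Integrable (fun v : ℝ => v ^ i * Real.exp (-a * v ^ 2)) := by
    intro i
    have h : (-1 : ℝ) < (i : ℝ) := lt_of_lt_of_le (by norm_num) (Nat.cast_nonneg i)
    simpa [Real.rpow_natCast] using integrable_rpow_mul_exp_neg_mul_sq ha h
  have hsum : Integrable (fun v : ℝ => (v + c) ^ n * Real.exp (-a * v ^ 2)) := by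
    have e : (fun v : ℝ => (v + c) ^ n * Real.exp (-a * v ^ 2))
        = fun v => ∑ i ∈ Finset.range (n + 1),
            (v ^ i * Real.exp (-a * v ^ 2)) * (c ^ (n - i) * (n.choose i : ℝ)) := by
      funext v
      rw [add_pow, Finset.sum_mul]
      refine Finset.sum_congr rfl fun i _ => by ring
    rw [e]
    exact integrable_finset_sum _ fun i _ => (base i).mul_const _
  have := hsum.comp_sub_right c
  refine this.congr (Filter.Eventually.of_forall fun u => ?_)
  simp [sub_add_cancel]

lemma pg_tendsto (n : ℕ) {a : ℝ} (ha : 0 < a) (c : ℝ) :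
    Tendsto (fun u : ℝ => u ^ n * Real.exp (-a * (u - c) ^ 2)) atTop (nhds 0) := by
  have base : ∀ i : ℕ, Tendsto (fun v : ℝ => v ^ i * Real.exp (-a * v ^ 2)) atTop (nhds 0) := by
    intro i
    have hlo : (fun v : ℝ => v ^ i * Real.exp (-a * v ^ 2)) =o[atTop]
        fun v : ℝ => Real.exp (-(1 / 2) * v) := by
      have := rpow_mul_exp_neg_mul_sq_isLittleO_exp_neg ha (i : ℝ)
      simpa [Real.rpow_natCast] using this
    have hexp : Tendsto (fun v : ℝ => Real.exp (-(1 / 2) * v)) atTop (nhds 0) := by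
      have : Tendsto (fun v : ℝ => -(1 / 2) * v) atTop atBot := by
        apply Filter.Tendsto.const_mul_atTop_of_neg (by norm_num : (-(1:ℝ)/2) < 0) tendsto_id |>.congr fun v => by simp [id]; ring
      exact Real.tendsto_exp_atBot.comp this
    exact hlo.trans_tendsto hexp
  have hsum : Tendsto (fun v : ℝ => (v + c) ^ n * Real.exp (-a * v ^ 2)) atTop (nhds 0) := by
    have e : (fun v : ℝ => (v + c) ^ n * Real.exp (-a * v ^ 2))
        = fun v => ∑ i ∈ Finset.range (n + 1),
            (v ^ i * Real.exp (-a * v ^ 2)) * (c ^ (n - i) * (n.choose i : ℝ)) := by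
      funext v
      rw [add_pow, Finset.sum_mul]
      refine Finset.sum_congr rfl fun i _ => by ring
    rw [e]
    have := tendsto_finset_sum (Finset.range (n + 1))
      (fun i _ => (base i).mul_const (c ^ (n - i) * (n.choose i : ℝ)))
    simpa using this
  have hshift : Tendsto (fun u : ℝ => u - c) atTop atTop :=
    tendsto_atTop_add_const_right atTop (-c) tendsto_id |>.congr fun u => by simp [id]; ring
  have := hsum.comp hshift
  refine this.congr fun u => ?_
  simp [Function.comp, sub_add_cancel]

lemma key_ineq {ρ : ℝ} (h1 : -1 < ρ) (h2 : ρ < 1) (X Y : ℝ) :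
    (X ^ 2 + Y ^ 2) / (2 * (1 + |ρ|)) ≤ (1 / (2 * (1 - ρ ^ 2))) * (X ^ 2 - 2 * ρ * X * Y + Y ^ 2) := by
  have hr : 0 < 1 - ρ ^ 2 := by nlinarith
  have ha : 0 < 1 + |ρ| := by positivity
  rw [mul_comm (1 / (2 * (1 - ρ ^ 2))), mul_one_div, div_le_div_iff₀ (by positivity) (by positivity)]
  have h8 : 2 * |X * Y| ≤ X ^ 2 + Y ^ 2 := by
    rw [abs_mul]
    nlinarith [two_mul_le_add_sq |X| |Y|, sq_abs X, sq_abs Y]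
  have h6 : 2 * (ρ * (X * Y)) ≤ |ρ| * (X ^ 2 + Y ^ 2) := by
    have h7 : ρ * (X * Y) ≤ |ρ| * |X * Y| := by
      rw [← abs_mul]; exact le_abs_self _
    nlinarith [abs_nonneg ρ]
  have h9 := mul_le_mul_of_nonneg_left h6 ha.le
  nlinarith [sq_abs ρ]


lemma binormal_fact {μ₁ μ₂ σ₁ σ₂ ρ : ℝ} (hσ₁ : 0 < σ₁) (hσ₂ : 0 < σ₂)
    (h1 : -1 < ρ) (h2 : ρ < 1) (u₁ u₂ : ℝ) :
    binormalPDF μ₁ μ₂ σ₁ σ₂ ρ u₁ u₂ =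
      ((1 / (2 * Real.pi * σ₁ * σ₂ * Real.sqrt (1 - ρ ^ 2))) *
        Real.exp (-(u₁ - μ₁) ^ 2 / (2 * σ₁ ^ 2))) *
      Real.exp (-(1 / (2 * (σ₂ ^ 2 * (1 - ρ ^ 2)))) *
        (u₂ - (μ₂ + ρ * σ₂ / σ₁ * (u₁ - μ₁))) ^ 2) := by
  have hr : 0 < 1 - ρ ^ 2 := by nlinarith
  unfold binormalPDF
  rw [mul_assoc _ (Real.exp _) (Real.exp _), ← Real.exp_add]
  congr 1
  have hσ₁' : σ₁ ≠ 0 := hσ₁.ne'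
  have hσ₂' : σ₂ ≠ 0 := hσ₂.ne'
  have hr' : (1 : ℝ) - ρ ^ 2 ≠ 0 := hr.ne'
  field_simp
  ring






lemma pg_abs_integrable (n : ℕ) {a : ℝ} (ha : 0 < a) (c : ℝ) :
    Integrable (fun u : ℝ => |u| ^ n * Real.exp (-a * (u - c) ^ 2)) := by
  have := (pg_integrable n ha c).abs
  refine this.congr (Filter.Eventually.of_forall fun u => ?_)
  simp [abs_mul, abs_pow, abs_of_pos (Real.exp_pos _)]

lemma binormal_pos {μ₁ μ₂ σ₁ σ₂ ρ : ℝ} (hσ₁ : 0 < σ₁) (hσ₂ : 0 < σ₂)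
    (h1 : -1 < ρ) (h2 : ρ < 1) (u₁ u₂ : ℝ) : 0 < binormalPDF μ₁ μ₂ σ₁ σ₂ ρ u₁ u₂ := by
  have hr : 0 < 1 - ρ ^ 2 := by nlinarith
  have : 0 < Real.sqrt (1 - ρ ^ 2) := Real.sqrt_pos.2 hr
  unfold binormalPDF
  positivity

lemma binormal_le {μ₁ μ₂ σ₁ σ₂ ρ : ℝ} (hσ₁ : 0 < σ₁) (hσ₂ : 0 < σ₂)
    (h1 : -1 < ρ) (h2 : ρ < 1) (u₁ u₂ : ℝ) :
    binormalPDF μ₁ μ₂ σ₁ σ₂ ρ u₁ u₂ ≤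
      (1 / (2 * Real.pi * σ₁ * σ₂ * Real.sqrt (1 - ρ ^ 2))) *
        (Real.exp (-(1 / (2 * (1 + |ρ|) * σ₁ ^ 2)) * (u₁ - μ₁) ^ 2) *
         Real.exp (-(1 / (2 * (1 + |ρ|) * σ₂ ^ 2)) * (u₂ - μ₂) ^ 2)) := by
  have hr : 0 < 1 - ρ ^ 2 := by nlinarith
  have hs : 0 < Real.sqrt (1 - ρ ^ 2) := Real.sqrt_pos.2 hr
  have hρa : 0 < 1 + |ρ| := by positivity
  unfold binormalPDF
  rw [← Real.exp_add]
  apply mul_le_mul_of_nonneg_left _ (by positivity)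
  rw [Real.exp_le_exp]
  set x := u₁ - μ₁
  set y := u₂ - μ₂
  have key := key_ineq h1 h2 (x / σ₁) (y / σ₂)
  have e1 : (x / σ₁) ^ 2 - 2 * ρ * (x / σ₁) * (y / σ₂) + (y / σ₂) ^ 2
      = x ^ 2 / σ₁ ^ 2 - 2 * ρ * x * y / (σ₁ * σ₂) + y ^ 2 / σ₂ ^ 2 := by
    field_simp
  have e2 : ((x / σ₁) ^ 2 + (y / σ₂) ^ 2) / (2 * (1 + |ρ|))
      = (1 / (2 * (1 + |ρ|) * σ₁ ^ 2)) * x ^ 2 + (1 / (2 * (1 + |ρ|) * σ₂ ^ 2)) * y ^ 2 := by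
    field_simp
  rw [e1, e2] at key
  linarith

lemma binormal_integrable2D {μ₁ μ₂ σ₁ σ₂ ρ : ℝ} (hσ₁ : 0 < σ₁) (hσ₂ : 0 < σ₂)
    (h1 : -1 < ρ) (h2 : ρ < 1) (i j : ℕ) :
    Integrable (fun p : ℝ × ℝ => p.1 ^ i * p.2 ^ j * binormalPDF μ₁ μ₂ σ₁ σ₂ ρ p.1 p.2) := by
  have hr : 0 < 1 - ρ ^ 2 := by nlinarith
  have hs : 0 < Real.sqrt (1 - ρ ^ 2) := Real.sqrt_pos.2 hr
  have hρa : 0 < 1 + |ρ| := by positivity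
  set K : ℝ := 1 / (2 * Real.pi * σ₁ * σ₂ * Real.sqrt (1 - ρ ^ 2)) with hK
  have hKpos : 0 < K := by rw [hK]; positivity
  set a1 : ℝ := 1 / (2 * (1 + |ρ|) * σ₁ ^ 2) with ha1
  set a2 : ℝ := 1 / (2 * (1 + |ρ|) * σ₂ ^ 2) with ha2
  have ha1p : 0 < a1 := by rw [ha1]; positivity
  have ha2p : 0 < a2 := by rw [ha2]; positivity
  have hg : Integrable (fun p : ℝ × ℝ =>
      (|p.1| ^ i * Real.exp (-a1 * (p.1 - μ₁) ^ 2)) *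
      (K * (|p.2| ^ j * Real.exp (-a2 * (p.2 - μ₂) ^ 2)))) := by
    rw [Measure.volume_eq_prod]
    exact (pg_abs_integrable i ha1p μ₁).mul_prod ((pg_abs_integrable j ha2p μ₂).const_mul K)
  refine Integrable.mono' hg ?_ (Filter.Eventually.of_forall fun p => ?_)
  · apply Continuous.aestronglyMeasurable
    unfold binormalPDF
    fun_prop
  · have hb := binormal_le (μ₁ := μ₁) (μ₂ := μ₂) hσ₁ hσ₂ h1 h2 p.1 p.2
    have hfpos := (binormal_pos (μ₁ := μ₁) (μ₂ := μ₂) hσ₁ hσ₂ h1 h2 p.1 p.2).le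
    rw [Real.norm_eq_abs, abs_mul, abs_mul, abs_pow, abs_pow,
      abs_of_nonneg hfpos]
    calc |p.1| ^ i * |p.2| ^ j * binormalPDF μ₁ μ₂ σ₁ σ₂ ρ p.1 p.2
        ≤ |p.1| ^ i * |p.2| ^ j *
          (K * (Real.exp (-a1 * (p.1 - μ₁) ^ 2) * Real.exp (-a2 * (p.2 - μ₂) ^ 2))) := by
          apply mul_le_mul_of_nonneg_left _ (by positivity)
          simpa [hK, ha1, ha2, neg_mul] using hb
      _ = (|p.1| ^ i * Real.exp (-a1 * (p.1 - μ₁) ^ 2)) *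
          (K * (|p.2| ^ j * Real.exp (-a2 * (p.2 - μ₂) ^ 2))) := by ring

end Helpers

/-- Second key equation in the proof of Proposition 1.1 (integration by parts in `u₂`):
`m·(σ₁²σ₂² − σ₁₂²)·E[U₁^k U₂^{m-1}·1{U₁>0,U₂>0}]
  = E[(σ₁²·U₁^k U₂^{m+1} − σ₁₂·U₁^{k+1}U₂^m − (σ₁²μ₂ − σ₁₂μ₁)·U₁^k U₂^m)·1{U₁>0,U₂>0}]`. -/
theorem prop1_1_second_key_equation (μ₁ μ₂ σ₁ σ₂ ρ : ℝ) (hσ₁ : 0 < σ₁) (hσ₂ : 0 < σ₂)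
    (hρ : ρ ∈ Set.Ioo (-1 : ℝ) 1) (σ₁₂ : ℝ) (hσ₁₂ : σ₁₂ = ρ * σ₁ * σ₂)
    (k m : ℕ) (hk : 1 ≤ k) (hm : 1 ≤ m) :
    (m : ℝ) * (σ₁ ^ 2 * σ₂ ^ 2 - σ₁₂ ^ 2) *
        ∫ p in Set.Ioi (0 : ℝ) ×ˢ Set.Ioi (0 : ℝ),
          p.1 ^ k * p.2 ^ (m - 1) * binormalPDF μ₁ μ₂ σ₁ σ₂ ρ p.1 p.2
      = ∫ p in Set.Ioi (0 : ℝ) ×ˢ Set.Ioi (0 : ℝ),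
          (σ₁ ^ 2 * (p.1 ^ k * p.2 ^ (m + 1)) - σ₁₂ * (p.1 ^ (k + 1) * p.2 ^ m)
            - (σ₁ ^ 2 * μ₂ - σ₁₂ * μ₁) * (p.1 ^ k * p.2 ^ m))
            * binormalPDF μ₁ μ₂ σ₁ σ₂ ρ p.1 p.2 := by
  obtain ⟨h1, h2⟩ := hρ
  have hr : 0 < 1 - ρ ^ 2 := by nlinarith
  have hσ₁' : σ₁ ≠ 0 := hσ₁.ne'
  have hσ₂' : σ₂ ≠ 0 := hσ₂.ne'
  set c : ℝ := σ₁ ^ 2 * μ₂ - σ₁₂ * μ₁ with hc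
  set f : ℝ → ℝ → ℝ := binormalPDF μ₁ μ₂ σ₁ σ₂ ρ with hfdef
  set s2 : ℝ := σ₂ ^ 2 * (1 - ρ ^ 2) with hs2d
  have hs2 : 0 < s2 := by rw [hs2d]; positivity
  set A : ℝ → ℝ := fun x =>
    (1 / (2 * Real.pi * σ₁ * σ₂ * Real.sqrt (1 - ρ ^ 2))) *
      Real.exp (-(x - μ₁) ^ 2 / (2 * σ₁ ^ 2)) with hA
  set b : ℝ → ℝ := fun x => μ₂ + ρ * σ₂ / σ₁ * (x - μ₁) with hb
  set a : ℝ := 1 / (2 * s2) with ha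
  have hap : 0 < a := by rw [ha]; positivity
  have hfact : ∀ x y, f x y = A x * Real.exp (-a * (y - b x) ^ 2) := by
    intro x y
    rw [hfdef, binormal_fact hσ₁ hσ₂ h1 h2 x y, hA, hb, ha, hs2d]
  -- 1D integrability of y ↦ y^j * A x * exp(...)
  have intG : ∀ (x : ℝ) (j : ℕ),
      Integrable (fun y : ℝ => y ^ j * (A x * Real.exp (-a * (y - b x) ^ 2))) := by
    intro x j
    have := (pg_integrable j hap (b x)).const_mul (A x)
    exact this.congr (Filter.Eventually.of_forall fun y => by simp only [Pi.add_apply, Pi.sub_apply]; ring)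
  -- inner 1D identity
  have inner : ∀ x : ℝ,
      (m : ℝ) * s2 * ∫ y in Set.Ioi (0 : ℝ), y ^ (m - 1) * f x y
        = ∫ y in Set.Ioi (0 : ℝ), (y - b x) * y ^ m * f x y := by
    intro x
    simp only [hfact]
    have hderiv : ∀ y : ℝ, HasDerivAt (fun y => y ^ m * (A x * Real.exp (-a * (y - b x) ^ 2)))
        ((m : ℝ) * y ^ (m - 1) * (A x * Real.exp (-a * (y - b x) ^ 2))
          + y ^ m * (A x * (Real.exp (-a * (y - b x) ^ 2) * (-a * (2 * (y - b x)))))) y := by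
      intro y
      have hd1 : HasDerivAt (fun y : ℝ => (y - b x) ^ 2) (2 * (y - b x)) y := by
        simpa using ((hasDerivAt_id y).sub_const (b x)).fun_pow 2
      have hd2 := ((hd1.const_mul (-a)).exp).const_mul (A x)
      have hd3 := (hasDerivAt_pow m y).fun_mul hd2
      simpa using hd3
    have hQint : Integrable (fun y : ℝ =>
        y ^ m * (A x * (Real.exp (-a * (y - b x) ^ 2) * (-a * (2 * (y - b x)))))) := by
      have := ((intG x (m + 1)).const_mul (-(2 * a))).add ((intG x m).const_mul (2 * a * b x))
      exact this.congr (Filter.Eventually.of_forall fun y => by simp only [Pi.add_apply, Pi.sub_apply]; ring)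
    have hPint : Integrable (fun y : ℝ =>
        (m : ℝ) * y ^ (m - 1) * (A x * Real.exp (-a * (y - b x) ^ 2))) := by
      have := (intG x (m - 1)).const_mul (m : ℝ)
      exact this.congr (Filter.Eventually.of_forall fun y => by simp only [Pi.add_apply, Pi.sub_apply]; ring)
    have htend : Tendsto (fun y : ℝ => y ^ m * (A x * Real.exp (-a * (y - b x) ^ 2)))
        atTop (nhds 0) := by
      have := Filter.Tendsto.congr (fun y : ℝ => by ring :
          ∀ y : ℝ, A x * (y ^ m * Real.exp (-a * (y - b x) ^ 2))
            = y ^ m * (A x * Real.exp (-a * (y - b x) ^ 2)))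
        ((pg_tendsto m hap (b x)).const_mul (A x))
      simpa using this
    have hFTC := integral_Ioi_of_hasDerivAt_of_tendsto' (a := 0) (m := 0) (fun y _ => hderiv y)
      (hPint.add hQint).integrableOn htend
    rw [integral_add hPint.integrableOn hQint.integrableOn, zero_pow (by omega : m ≠ 0),
      zero_mul, sub_zero] at hFTC
    have hPeq : ∫ y in Set.Ioi (0 : ℝ), (m : ℝ) * y ^ (m - 1) * (A x * Real.exp (-a * (y - b x) ^ 2))
        = (m : ℝ) * ∫ y in Set.Ioi (0 : ℝ), y ^ (m - 1) * (A x * Real.exp (-a * (y - b x) ^ 2)) := by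
      simp_rw [mul_assoc]
      exact integral_const_mul _ _
    have e5 : ∀ y : ℝ, (y - b x) * y ^ m * (A x * Real.exp (-a * (y - b x) ^ 2))
        = s2 * (-(y ^ m * (A x * (Real.exp (-a * (y - b x) ^ 2) * (-a * (2 * (y - b x))))))) := by
      intro y
      rw [ha]
      field_simp
    have e6 : ∫ y in Set.Ioi (0 : ℝ), (y - b x) * y ^ m * (A x * Real.exp (-a * (y - b x) ^ 2))
        = s2 * -(∫ y in Set.Ioi (0 : ℝ),
            y ^ m * (A x * (Real.exp (-a * (y - b x) ^ 2) * (-a * (2 * (y - b x)))))) := by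
      rw [← integral_neg, ← integral_const_mul]
      exact setIntegral_congr_fun measurableSet_Ioi fun y _ => e5 y
    rw [hPeq] at hFTC
    rw [e6]
    have : ∫ y in Set.Ioi (0 : ℝ),
        y ^ m * (A x * (Real.exp (-a * (y - b x) ^ 2) * (-a * (2 * (y - b x)))))
      = -((m : ℝ) * ∫ y in Set.Ioi (0 : ℝ),
          y ^ (m - 1) * (A x * Real.exp (-a * (y - b x) ^ 2))) := by linarith
    rw [this]
    ring
  -- Fubini side
  have h2d : ∀ i j : ℕ, IntegrableOn (fun p : ℝ × ℝ => p.1 ^ i * p.2 ^ j * f p.1 p.2)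
      (Set.Ioi 0 ×ˢ Set.Ioi 0) (volume.prod volume) := by
    intro i j
    rw [← Measure.volume_eq_prod]
    exact (binormal_integrable2D hσ₁ hσ₂ h1 h2 i j).integrableOn
  have hR : IntegrableOn (fun p : ℝ × ℝ =>
      (σ₁ ^ 2 * (p.1 ^ k * p.2 ^ (m + 1)) - σ₁₂ * (p.1 ^ (k + 1) * p.2 ^ m)
        - c * (p.1 ^ k * p.2 ^ m)) * f p.1 p.2)
      (Set.Ioi 0 ×ˢ Set.Ioi 0) (volume.prod volume) := by
    have := (((h2d k (m + 1)).const_mul (σ₁ ^ 2)).sub ((h2d (k + 1) m).const_mul σ₁₂)).sub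
      ((h2d k m).const_mul c)
    exact this.congr (Filter.Eventually.of_forall fun p => by simp only [Pi.add_apply, Pi.sub_apply]; ring)
  rw [Measure.volume_eq_prod ℝ ℝ, setIntegral_prod _ (h2d k (m - 1)), setIntegral_prod _ hR,
    ← integral_const_mul]
  refine setIntegral_congr_fun measurableSet_Ioi fun x _ => ?_
  have e1 : ∫ y in Set.Ioi (0 : ℝ), x ^ k * y ^ (m - 1) * f x y
      = x ^ k * ∫ y in Set.Ioi (0 : ℝ), y ^ (m - 1) * f x y := by
    simp_rw [mul_assoc]
    exact integral_const_mul _ _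
  have e2 : ∫ y in Set.Ioi (0 : ℝ),
      (σ₁ ^ 2 * (x ^ k * y ^ (m + 1)) - σ₁₂ * (x ^ (k + 1) * y ^ m)
        - c * (x ^ k * y ^ m)) * f x y
      = ∫ y in Set.Ioi (0 : ℝ), (σ₁ ^ 2 * x ^ k) * ((y - b x) * y ^ m * f x y) := by
    refine setIntegral_congr_fun measurableSet_Ioi fun y _ => ?_
    rw [hb, hc, hσ₁₂]
    field_simp
    ring
  rw [e1, e2, integral_const_mul, ← inner x]
  have hD : σ₁ ^ 2 * σ₂ ^ 2 - σ₁₂ ^ 2 = σ₁ ^ 2 * s2 := by rw [hσ₁₂, hs2d]; ring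
  rw [hD]
  ring
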